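/- For every real p ≥ 7, the function f(p) = cot(π/p) / (√3 · cot((p−1)π/(2p))) satisfies f'(p) > 0, i.e., f is strictly increasing on [7, ∞), and f(7) > 4.05. -/

import Mathlib

open Real Set

lemma hasDerivAt_cot' {x : ℝ} (hx : Real.sin x ≠ 0) :
    HasDerivAt Real.cot (-(1 / Real.sin x ^ 2)) x := by
  have hfun : Real.cot = fun y => Real.cos y / Real.sin y :=
    funext fun y => Real.cot_eq_cos_div_sin y
  have h : HasDerivAt (fun y => Real.cos y / Real.sin y) _ x := (Real.hasDerivAt_cos x).div (Real.hasDerivAt_sin x) hx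
  rw [hfun]
  convert h using 1
  have h1 : Real.sin x ^ 2 + Real.cos x ^ 2 = 1 := Real.sin_sq_add_cos_sq x
  field_simp
  nlinarith [h1]

lemma case1_key (p : ℝ) (hp : 7 ≤ p) :
    HasDerivAt (fun p : ℝ => Real.cot (π / p) / (Real.sqrt 3 * Real.cot ((p - 1) * π / (2 * p))))
      ((π / p ^ 2 * (1 / Real.sin (π / p) ^ 2) * (Real.sqrt 3 * Real.cot ((p - 1) * π / (2 * p)))
        + Real.cot (π / p) * (Real.sqrt 3 * (1 / Real.sin ((p - 1) * π / (2 * p)) ^ 2) * (π / (2 * p ^ 2))))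
        / (Real.sqrt 3 * Real.cot ((p - 1) * π / (2 * p))) ^ 2) p ∧
    0 < (π / p ^ 2 * (1 / Real.sin (π / p) ^ 2) * (Real.sqrt 3 * Real.cot ((p - 1) * π / (2 * p)))
        + Real.cot (π / p) * (Real.sqrt 3 * (1 / Real.sin ((p - 1) * π / (2 * p)) ^ 2) * (π / (2 * p ^ 2))))
        / (Real.sqrt 3 * Real.cot ((p - 1) * π / (2 * p))) ^ 2 := by
  have hp0 : (0 : ℝ) < p := by linarith
  set u := π / p with hu
  set v := (p - 1) * π / (2 * p) with hv
  have hπ := Real.pi_pos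
  have hu0 : 0 < u := div_pos hπ hp0
  have hu2 : u < π / 2 := by
    rw [hu, div_lt_div_iff₀ hp0 two_pos]
    nlinarith
  have hveq : v = π / 2 - π / (2 * p) := by
    rw [hv]; field_simp
  have hv0 : 0 < v := by
    rw [hveq]
    have : π / (2 * p) < π / 2 := by
      rw [div_lt_div_iff₀ (by linarith) two_pos]; nlinarith
    linarith
  have hv2 : v < π / 2 := by
    rw [hveq]
    have : 0 < π / (2 * p) := div_pos hπ (by linarith)
    linarith
  have hsu : 0 < Real.sin u := Real.sin_pos_of_pos_of_lt_pi hu0 (by linarith)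
  have hsv : 0 < Real.sin v := Real.sin_pos_of_pos_of_lt_pi hv0 (by linarith)
  have hcu : 0 < Real.cos u := Real.cos_pos_of_mem_Ioo ⟨by linarith, hu2⟩
  have hcv : 0 < Real.cos v := Real.cos_pos_of_mem_Ioo ⟨by linarith, hv2⟩
  have hcotu : 0 < Real.cot u := by rw [Real.cot_eq_cos_div_sin]; exact div_pos hcu hsu
  have hcotv : 0 < Real.cot v := by rw [Real.cot_eq_cos_div_sin]; exact div_pos hcv hsv
  have hs3 : (0 : ℝ) < Real.sqrt 3 := Real.sqrt_pos.2 (by norm_num)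
  have hne : Real.sqrt 3 * Real.cot v ≠ 0 := (mul_pos hs3 hcotv).ne'
  have h1 : HasDerivAt (fun q : ℝ => π / q) (-(π / p ^ 2)) p := by
    have := (hasDerivAt_inv hp0.ne').const_mul π
    simpa [div_eq_mul_inv, mul_neg] using this
  have h2 : HasDerivAt (fun q : ℝ => (q - 1) * π / (2 * q)) (π / (2 * p ^ 2)) p := by
    have hnum : HasDerivAt (fun q : ℝ => (q - 1) * π) (1 * π) p :=
      ((hasDerivAt_id p).sub_const 1).mul_const π
    have hden : HasDerivAt (fun q : ℝ => 2 * q) (2 * 1) p := (hasDerivAt_id p).const_mul 2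
    have : HasDerivAt (fun q : ℝ => (q - 1) * π / (2 * q)) _ p := hnum.div hden (by positivity)
    convert this using 1
    field_simp
    ring
  have htop : HasDerivAt (fun q : ℝ => Real.cot (π / q)) (-(1 / Real.sin u ^ 2) * -(π / p ^ 2)) p :=
    (hasDerivAt_cot' (x := π / p) hsu.ne').comp (h₂ := Real.cot) p h1
  have hbotc : HasDerivAt (fun q : ℝ => Real.cot ((q - 1) * π / (2 * q)))
      (-(1 / Real.sin v ^ 2) * (π / (2 * p ^ 2))) p :=
    (hasDerivAt_cot' (x := (p - 1) * π / (2 * p)) hsv.ne').comp (h₂ := Real.cot) p h2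
  have hbot : HasDerivAt (fun q : ℝ => Real.sqrt 3 * Real.cot ((q - 1) * π / (2 * q)))
      (Real.sqrt 3 * (-(1 / Real.sin v ^ 2) * (π / (2 * p ^ 2)))) p := hbotc.const_mul _
  have hdiv : HasDerivAt (fun p : ℝ => Real.cot (π / p) / (Real.sqrt 3 * Real.cot ((p - 1) * π / (2 * p)))) _ p := htop.div hbot hne
  constructor
  · convert hdiv using 1
    ring
  · apply div_pos
    · have t1 : 0 < π / p ^ 2 * (1 / Real.sin u ^ 2) * (Real.sqrt 3 * Real.cot v) := by positivity
      have t2 : 0 < Real.cot u * (Real.sqrt 3 * (1 / Real.sin v ^ 2) * (π / (2 * p ^ 2))) := by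
        positivity
      linarith
    · positivity

/-- **Monotonicity of the Case 1 angle bound.**
For `f(p) = cot(π/p) / (√3 · cot((p−1)π/(2p)))`, the derivative is positive on
`[7, ∞)` (it equals `π(cot(π/p)csc²(π/(2p)) + 2cot(π/(2p))csc²(π/p))/(2p²)`),
hence `f` is strictly increasing on `[7, ∞)`, and `f(7) > 4.05`. -/
theorem case1_bound :
    (∀ p : ℝ, 7 ≤ p →
      0 < deriv (fun p : ℝ => Real.cot (π / p) / (Real.sqrt 3 * Real.cot ((p - 1) * π / (2 * p)))) p) ∧
    StrictMonoOn (fun p : ℝ => Real.cot (π / p) / (Real.sqrt 3 * Real.cot ((p - 1) * π / (2 * p))))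
      (Ici (7 : ℝ)) ∧
    (4.05 : ℝ) < Real.cot (π / 7) / (Real.sqrt 3 * Real.cot ((7 - 1) * π / (2 * 7))) := by
  have hd : ∀ p : ℝ, 7 ≤ p →
      0 < deriv (fun p : ℝ => Real.cot (π / p) / (Real.sqrt 3 * Real.cot ((p - 1) * π / (2 * p)))) p := by
    intro p hp
    obtain ⟨h1, h2⟩ := case1_key p hp
    rw [h1.deriv]
    exact h2
  refine ⟨hd, ?_, ?_⟩
  · apply strictMonoOn_of_deriv_pos (convex_Ici 7)
    · exact fun p hp => ((case1_key p hp).1.continuousAt).continuousWithinAt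
    · intro p hp
      rw [interior_Ici] at hp
      exact hd p hp.le
  · have hπ := Real.pi_pos
    have hπ15 : π < 3.15 := by
      have := Real.pi_lt_d2; norm_num at this ⊢; linarith
    rw [show ((7 : ℝ) - 1) * π / (2 * 7) = π / 2 - π / 14 by ring]
    have hy0 : (0 : ℝ) < π / 14 := by linarith
    have hyu : π / 14 < 0.225 := by linarith
    have hx0 : (0 : ℝ) < π / 7 := by linarith
    have hxu : π / 7 < 0.45 := by linarith
    have hsy : Real.sin (π / 14) < 0.225 := lt_trans (Real.sin_lt hy0) hyu
    have hsy0 : 0 < Real.sin (π / 14) := Real.sin_pos_of_pos_of_lt_pi hy0 (by linarith)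
    have hcy0 : 0 < Real.cos (π / 14) := Real.cos_pos_of_mem_Ioo ⟨by linarith, by linarith⟩
    have hcy : (0.9746 : ℝ) < Real.cos (π / 14) := by
      have := Real.one_sub_sq_div_two_lt_cos (x := π / 14) hy0.ne'
      nlinarith
    have hsx : Real.sin (π / 7) < 0.45 := lt_trans (Real.sin_lt hx0) hxu
    have hsx0 : 0 < Real.sin (π / 7) := Real.sin_pos_of_pos_of_lt_pi hx0 (by linarith)
    have hcx : (0.89875 : ℝ) < Real.cos (π / 7) := by
      have := Real.one_sub_sq_div_two_lt_cos (x := π / 7) hx0.ne'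
      nlinarith
    have hcotv : Real.cot (π / 2 - π / 14) = Real.sin (π / 14) / Real.cos (π / 14) := by
      rw [Real.cot_eq_cos_div_sin, Real.cos_pi_div_two_sub, Real.sin_pi_div_two_sub]
    have hcotv0 : 0 < Real.cot (π / 2 - π / 14) := by
      rw [hcotv]; exact div_pos hsy0 hcy0
    have hcotvu : Real.cot (π / 2 - π / 14) < 0.231 := by
      rw [hcotv, div_lt_iff₀ hcy0]; nlinarith
    have hcotx : (1.997 : ℝ) < Real.cot (π / 7) := by
      rw [Real.cot_eq_cos_div_sin, lt_div_iff₀ hsx0]; nlinarith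
    have hs3 : (0 : ℝ) < Real.sqrt 3 := Real.sqrt_pos.2 (by norm_num)
    have hs3u : Real.sqrt 3 < 1.7321 := by
      rw [show (1.7321 : ℝ) = Real.sqrt (1.7321 ^ 2) by rw [Real.sqrt_sq]; norm_num]
      exact Real.sqrt_lt_sqrt (by norm_num) (by norm_num)
    rw [lt_div_iff₀ (mul_pos hs3 hcotv0)]
    nlinarith [mul_pos hs3 hcotv0]
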